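/- Let K be a complex Hilbert space, A_1, …, A_n positive invertible bounded self-adjoint operators on K, μ_1, …, μ_n > 0 real numbers, and y ∈ K. Then for any u_1, …, u_n ∈ K with Σ_k μ_k u_k = y, one has Σ_k ⟨A_k u_k, u_k⟩ ≥ ⟨(Σ_j μ_j² A_j^{-1})^{-1} y, y⟩. -/

import Mathlib

/-- Minimization lemma: lower bound for Σ⟨A_k u_k, u_k⟩ under Σ μ_k u_k = y. -/
theorem stmt1 {K : Type*} [NormedAddCommGroup K] [InnerProductSpace ℂ K] [CompleteSpace K]
    (n : ℕ) (A Ainv : Fin n → K →L[ℂ] K) (μ : Fin n → ℝ) (y : K)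
    (hA : ∀ k, (A k).IsPositive)
    (hAinv : ∀ k, (A k) ∘L (Ainv k) = 1 ∧ (Ainv k) ∘L (A k) = 1)
    (hAc : ∀ k, ∃ c : ℝ, 0 < c ∧ ∀ x : K, c * ‖x‖ ^ 2 ≤ ((inner ℂ ((A k) x) x : ℂ)).re)
    (hμ : ∀ k, 0 < μ k)
    (Tinv : K →L[ℂ] K)
    (hTinv : (∑ j, ((μ j : ℂ) ^ 2) • Ainv j) ∘L Tinv = 1 ∧
             Tinv ∘L (∑ j, ((μ j : ℂ) ^ 2) • Ainv j) = 1)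
    (u : Fin n → K) (hu : ∑ k, (μ k : ℂ) • u k = y) :
    ((inner ℂ (Tinv y) y : ℂ)).re ≤ ∑ k, ((inner ℂ ((A k) (u k)) (u k) : ℂ)).re := by
  set v := Tinv y with hv
  -- (Σ μ_j² Ainv_j) v = y
  have hsum2 : (∑ j, ((μ j : ℂ) ^ 2) • Ainv j) v = y := by
    have := congrArg (fun T : K →L[ℂ] K => T y) hTinv.1
    simpa using this
  -- ⟨v, y⟩ = Σ μ_k² ⟨v, Ainv_k v⟩
  have hvy1 : (inner ℂ v y : ℂ) = ∑ k, (μ k : ℂ) ^ 2 * (inner ℂ v (Ainv k v) : ℂ) := by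
    conv_lhs => rw [← hsum2]
    simp [ContinuousLinearMap.sum_apply, inner_sum, ContinuousLinearMap.smul_apply,
      inner_smul_right]
  -- ⟨v, y⟩ = Σ μ_k ⟨v, u_k⟩
  have hvy2 : (inner ℂ v y : ℂ) = ∑ k, (μ k : ℂ) * (inner ℂ v (u k) : ℂ) := by
    rw [← hu, inner_sum]
    exact Finset.sum_congr rfl fun i _ => inner_smul_right _ _ _
  -- per-k key inequality
  have key : ∀ k, 2 * ((μ k : ℂ) * (inner ℂ v (u k) : ℂ)).re ≤
      ((inner ℂ ((A k) (u k)) (u k) : ℂ)).re + ((μ k : ℂ) ^ 2 * (inner ℂ v (Ainv k v) : ℂ)).re := by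
    intro k
    set w : K := (μ k : ℂ) • v with hw
    have hAw : (A k) ((Ainv k) w) = w := by
      have := congrArg (fun T : K →L[ℂ] K => T w) (hAinv k).1
      simpa using this
    have hsymm : ∀ a b : K, (inner ℂ ((A k) a) b : ℂ) = inner ℂ a ((A k) b) :=
      (ContinuousLinearMap.isSelfAdjoint_iff_isSymmetric.mp (hA k).isSelfAdjoint)
    have h0 : 0 ≤ ((inner ℂ ((A k) (u k - (Ainv k) w)) (u k - (Ainv k) w) : ℂ)).re :=
      (Complex.nonneg_iff.mp ((hA k).inner_nonneg_left _)).1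
    have hexp : (inner ℂ ((A k) (u k - (Ainv k) w)) (u k - (Ainv k) w) : ℂ)
        = (inner ℂ ((A k) (u k)) (u k) : ℂ) - inner ℂ (u k) w - inner ℂ w (u k)
          + inner ℂ w ((Ainv k) w) := by
      rw [map_sub, inner_sub_left, inner_sub_right, inner_sub_right, hAw]
      rw [hsymm (u k) ((Ainv k) w), hAw]
      ring
    have hre : ((inner ℂ (u k) w : ℂ)).re = ((inner ℂ w (u k) : ℂ)).re := by
      rw [← inner_conj_symm (u k) w]
      exact Complex.conj_re _
    have hwu : (inner ℂ w (u k) : ℂ) = (μ k : ℂ) * inner ℂ v (u k) := by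
      rw [hw, inner_smul_left]
      simp
    have hwAw : (inner ℂ w ((Ainv k) w) : ℂ) = (μ k : ℂ) ^ 2 * inner ℂ v ((Ainv k) v) := by
      rw [hw, map_smul, inner_smul_left, inner_smul_right, Complex.conj_ofReal]
      ring
    rw [hexp] at h0
    simp only [Complex.sub_re, Complex.add_re] at h0
    rw [hre, hwu, hwAw] at h0
    linarith
  -- sum up
  have hsumkey : ∑ k, 2 * ((μ k : ℂ) * (inner ℂ v (u k) : ℂ)).re ≤
      (∑ k, ((inner ℂ ((A k) (u k)) (u k) : ℂ)).re) +
      ∑ k, ((μ k : ℂ) ^ 2 * (inner ℂ v (Ainv k v) : ℂ)).re := by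
    rw [← Finset.sum_add_distrib]
    exact Finset.sum_le_sum fun k _ => key k
  have e1 : ∑ k, 2 * ((μ k : ℂ) * (inner ℂ v (u k) : ℂ)).re = 2 * ((inner ℂ v y : ℂ)).re := by
    rw [← Finset.mul_sum, ← Complex.re_sum, ← hvy2]
  have e2 : ∑ k, ((μ k : ℂ) ^ 2 * (inner ℂ v (Ainv k v) : ℂ)).re = ((inner ℂ v y : ℂ)).re := by
    rw [← Complex.re_sum, ← hvy1]
  rw [e1, e2] at hsumkey
  linarith
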